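/- arXiv:1503.04546 — 6 statements merged into one kernel-verified Lean document; each statement's English description precedes it below -/
import Mathlib

section
/- Let λ ∈ ℝ and let v₀,…,v₈ be the D2Q9 velocities. For every α ∈ ℝ, every ũ = (ũˣ, ũʸ) ∈ ℝ² and every j ∈ {0,…,8}, the shifted third-order moment polynomial P₆(X,Y) = X(αX² + Y²) satisfies the identity α(vⱼˣ − ũˣ)³ + (vⱼˣ − ũˣ)(vⱼʸ − ũʸ)² = (vⱼˣ − ũˣ)(vⱼʸ − ũʸ)² + α( −3ũˣ(vⱼˣ − ũˣ)² + (λ² − 3(ũˣ)²)(vⱼˣ − ũˣ) + ũˣ(λ² − (ũˣ)²) ). -/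
/-- x-components of the D2Q9 velocities. -/
def vx (lam : ℝ) : Fin 9 → ℝ := ![0, lam, 0, -lam, 0, lam, -lam, -lam, lam]

/-- y-components of the D2Q9 velocities. -/
def vy (lam : ℝ) : Fin 9 → ℝ := ![0, 0, lam, 0, -lam, lam, lam, -lam, -lam]

/-- On the D2Q9 velocity set, the shifted moment polynomial `X (α X² + Y²)`
replaces its cubic part by a combination of lower-order shifted polynomials. -/
theorem stmt_0 (lam : ℝ) (α : ℝ) (ux uy : ℝ) (j : Fin 9) :
    α * (vx lam j - ux) ^ 3 + (vx lam j - ux) * (vy lam j - uy) ^ 2 =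
      (vx lam j - ux) * (vy lam j - uy) ^ 2 +
        α * (-3 * ux * (vx lam j - ux) ^ 2 + (lam ^ 2 - 3 * ux ^ 2) * (vx lam j - ux)
          + ux * (lam ^ 2 - ux ^ 2)) := by
  have h : (vx lam j) ^ 3 = lam ^ 2 * vx lam j := by
    fin_cases j
    · show (0:ℝ) ^ 3 = lam ^ 2 * 0; ring
    · show lam ^ 3 = lam ^ 2 * lam; ring
    · show (0:ℝ) ^ 3 = lam ^ 2 * 0; ring
    · show (-lam) ^ 3 = lam ^ 2 * (-lam); ring
    · show (0:ℝ) ^ 3 = lam ^ 2 * 0; ring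
    · show lam ^ 3 = lam ^ 2 * lam; ring
    · show (-lam) ^ 3 = lam ^ 2 * (-lam); ring
    · show (-lam) ^ 3 = lam ^ 2 * (-lam); ring
    · show lam ^ 3 = lam ^ 2 * lam; ring
  linear_combination α * h
end

section
/- Let λ ∈ ℝ with λ ≠ 0 and let v₀,…,v₈ be the D2Q9 velocities. For every α ∈ ℝ and every ũ = (ũˣ, ũʸ) ∈ ℝ², the 9×9 real moment matrix M with entries M_{kj} = Q_k(vⱼ − ũ), where (Q₀,…,Q₈) are the polynomials 1, X, Y, X²+Y², X²−Y², XY, XY²+α(X²+Y²), YX²+α(X²+Y²), X²Y², is invertible. -/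
set_option maxHeartbeats 1000000

/-- The moment polynomials `1, X, Y, X²+Y², X²−Y², XY, XY²+α(X²+Y²),
YX²+α(X²+Y²), X²Y²` evaluated at `(x, y)`. -/
def Q (α x y : ℝ) : Fin 9 → ℝ :=
  ![1, x, y, x ^ 2 + y ^ 2, x ^ 2 - y ^ 2, x * y,
    x * y ^ 2 + α * (x ^ 2 + y ^ 2), y * x ^ 2 + α * (x ^ 2 + y ^ 2),
    x ^ 2 * y ^ 2]

/-- The moment matrix `M_{kj} = Q_k(v_j − ũ)` of the relative velocity scheme. -/
def Mmat (lam α ux uy : ℝ) : Matrix (Fin 9) (Fin 9) ℝ :=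
  fun k j => Q α (vx lam j - ux) (vy lam j - uy) k

section vecEval
variable {β : Type*} (a0 a1 a2 a3 a4 a5 a6 a7 a8 : β)
lemma v9_0 : ![a0,a1,a2,a3,a4,a5,a6,a7,a8] (0 : Fin 9) = a0 := rfl
lemma v9_1 : ![a0,a1,a2,a3,a4,a5,a6,a7,a8] (1 : Fin 9) = a1 := rfl
lemma v9_2 : ![a0,a1,a2,a3,a4,a5,a6,a7,a8] (2 : Fin 9) = a2 := rfl
lemma v9_3 : ![a0,a1,a2,a3,a4,a5,a6,a7,a8] (3 : Fin 9) = a3 := rfl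
lemma v9_4 : ![a0,a1,a2,a3,a4,a5,a6,a7,a8] (4 : Fin 9) = a4 := rfl
lemma v9_5 : ![a0,a1,a2,a3,a4,a5,a6,a7,a8] (5 : Fin 9) = a5 := rfl
lemma v9_6 : ![a0,a1,a2,a3,a4,a5,a6,a7,a8] (6 : Fin 9) = a6 := rfl
lemma v9_7 : ![a0,a1,a2,a3,a4,a5,a6,a7,a8] (7 : Fin 9) = a7 := rfl
lemma v9_8 : ![a0,a1,a2,a3,a4,a5,a6,a7,a8] (8 : Fin 9) = a8 := rfl
end vecEval

/-- Change-of-basis matrix expressing the shifted polynomials `Q_k(· − (a,b))`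
in terms of `Q_0, …, Q_8`. -/
noncomputable def Cm (α a b : ℝ) : Matrix (Fin 9) (Fin 9) ℝ := !![
  1,0,0,0,0,0,0,0,0;
  -a,1,0,0,0,0,0,0,0;
  -b,0,1,0,0,0,0,0,0;
  a^2+b^2,-2*a,-2*b,1,0,0,0,0,0;
  a^2-b^2,-2*a,2*b,0,1,0,0,0,0;
  a*b,-b,-a,0,0,1,0,0,0;
  α*(a^2+b^2)-a*b^2, b^2-2*a*α, 2*a*b-2*b*α, -a/2, a/2, -2*b,1,0,0;
  α*(a^2+b^2)-a^2*b, 2*a*b-2*a*α, a^2-2*b*α, -b/2, -b/2, -2*a,0,1,0;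
  a^2*b^2, -2*a*b^2, -2*a^2*b, 2*α*(a+b)+(a^2+b^2)/2, (b^2-a^2)/2, 4*a*b, -2*a,-2*b,1]

/-- Row operation adding `α` times the `X²+Y²` row to rows 6 and 7. -/
def Rm (α : ℝ) : Matrix (Fin 9) (Fin 9) ℝ := !![
  1,0,0,0,0,0,0,0,0;
  0,1,0,0,0,0,0,0,0;
  0,0,1,0,0,0,0,0,0;
  0,0,0,1,0,0,0,0,0;
  0,0,0,0,1,0,0,0,0;
  0,0,0,0,0,1,0,0,0;
  0,0,0,α,0,0,1,0,0;
  0,0,0,α,0,0,0,1,0;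
  0,0,0,0,0,0,0,0,1]

/-- The moment matrix of the homogeneous family `1,X,Y,X²+Y²,X²−Y²,XY,XY²,X²Y,X²Y²`. -/
def Am (lam : ℝ) : Matrix (Fin 9) (Fin 9) ℝ := !![
  1, 1, 1, 1, 1, 1, 1, 1, 1;
  0, lam, 0, -lam, 0, lam, -lam, -lam, lam;
  0, 0, lam, 0, -lam, lam, lam, -lam, -lam;
  0, lam^2, lam^2, lam^2, lam^2, 2*lam^2, 2*lam^2, 2*lam^2, 2*lam^2;
  0, lam^2, -lam^2, lam^2, -lam^2, 0, 0, 0, 0;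
  0, 0, 0, 0, 0, lam^2, -lam^2, lam^2, -lam^2;
  0, 0, 0, 0, 0, lam^3, -lam^3, -lam^3, lam^3;
  0, 0, 0, 0, 0, lam^3, lam^3, -lam^3, -lam^3;
  0, 0, 0, 0, 0, lam^4, lam^4, lam^4, lam^4]

/-- Explicit inverse of `Am`. -/
noncomputable def AmInv (lam : ℝ) : Matrix (Fin 9) (Fin 9) ℝ := !![
  1, 0, 0, -lam⁻¹^2, 0, 0, 0, 0, lam⁻¹^4;
  0, lam⁻¹/2, 0, lam⁻¹^2/4, lam⁻¹^2/4, 0, -lam⁻¹^3/2, 0, -lam⁻¹^4/2;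
  0, 0, lam⁻¹/2, lam⁻¹^2/4, -lam⁻¹^2/4, 0, 0, -lam⁻¹^3/2, -lam⁻¹^4/2;
  0, -lam⁻¹/2, 0, lam⁻¹^2/4, lam⁻¹^2/4, 0, lam⁻¹^3/2, 0, -lam⁻¹^4/2;
  0, 0, -lam⁻¹/2, lam⁻¹^2/4, -lam⁻¹^2/4, 0, 0, lam⁻¹^3/2, -lam⁻¹^4/2;
  0, 0, 0, 0, 0, lam⁻¹^2/4, lam⁻¹^3/4, lam⁻¹^3/4, lam⁻¹^4/4;
  0, 0, 0, 0, 0, -lam⁻¹^2/4, -lam⁻¹^3/4, lam⁻¹^3/4, lam⁻¹^4/4;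
  0, 0, 0, 0, 0, lam⁻¹^2/4, -lam⁻¹^3/4, -lam⁻¹^3/4, lam⁻¹^4/4;
  0, 0, 0, 0, 0, -lam⁻¹^2/4, lam⁻¹^3/4, -lam⁻¹^3/4, lam⁻¹^4/4]

/-- The unshifted moment matrix `Q_k(v_j)`. -/
def M0 (lam α : ℝ) : Matrix (Fin 9) (Fin 9) ℝ := !![
  1, 1, 1, 1, 1, 1, 1, 1, 1;
  0, lam, 0, -lam, 0, lam, -lam, -lam, lam;
  0, 0, lam, 0, -lam, lam, lam, -lam, -lam;
  0, lam^2, lam^2, lam^2, lam^2, 2*lam^2, 2*lam^2, 2*lam^2, 2*lam^2;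
  0, lam^2, -lam^2, lam^2, -lam^2, 0, 0, 0, 0;
  0, 0, 0, 0, 0, lam^2, -lam^2, lam^2, -lam^2;
  0, α*lam^2, α*lam^2, α*lam^2, α*lam^2, lam^3+2*α*lam^2, -lam^3+2*α*lam^2, -lam^3+2*α*lam^2, lam^3+2*α*lam^2;
  0, α*lam^2, α*lam^2, α*lam^2, α*lam^2, lam^3+2*α*lam^2, lam^3+2*α*lam^2, -lam^3+2*α*lam^2, -lam^3+2*α*lam^2;
  0, 0, 0, 0, 0, lam^4, lam^4, lam^4, lam^4]

lemma isUnit_of_mul_right_one {n : ℕ} (X Y : Matrix (Fin n) (Fin n) ℝ)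
    (h : X * Y = 1) : IsUnit X := by
  rw [Matrix.isUnit_iff_isUnit_det]
  exact IsUnit.of_mul_eq_one (a := X.det) Y.det (by rw [← Matrix.det_mul, h, Matrix.det_one])

lemma Rm_unit (α : ℝ) : IsUnit (Rm α) := by
  apply isUnit_of_mul_right_one _ (Rm (-α))
  ext i j
  fin_cases i <;> fin_cases j <;>
    norm_num [Rm, Matrix.mul_apply, Fin.sum_univ_succ, Matrix.one_apply, Fin.ext_iff,
      v9_0, v9_1, v9_2, v9_3, v9_4, v9_5, v9_6, v9_7, v9_8]

lemma Cm_unit (α a b : ℝ) : IsUnit (Cm α a b) := by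
  apply isUnit_of_mul_right_one _ (Cm α (-a) (-b))
  ext i j
  fin_cases i <;> fin_cases j <;>
    · norm_num [Cm, Matrix.mul_apply, Fin.sum_univ_succ, Matrix.one_apply, Fin.ext_iff,
        v9_0, v9_1, v9_2, v9_3, v9_4, v9_5, v9_6, v9_7, v9_8]
      try ring

lemma Am_unit (lam : ℝ) (hlam : lam ≠ 0) : IsUnit (Am lam) := by
  apply isUnit_of_mul_right_one _ (AmInv lam)
  ext i j
  fin_cases i <;> fin_cases j <;>
    · norm_num [Am, AmInv, Matrix.mul_apply, Fin.sum_univ_succ, Matrix.one_apply, Fin.ext_iff,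
        v9_0, v9_1, v9_2, v9_3, v9_4, v9_5, v9_6, v9_7, v9_8]
      try field_simp
      try ring

lemma M0_decomp (lam α : ℝ) : M0 lam α = Rm α * Am lam := by
  ext i j
  fin_cases i <;> fin_cases j <;>
    · norm_num [M0, Rm, Am, Matrix.mul_apply, Fin.sum_univ_succ,
        v9_0, v9_1, v9_2, v9_3, v9_4, v9_5, v9_6, v9_7, v9_8]
      try ring

lemma Mmat_decomp (lam α ux uy : ℝ) :
    Mmat lam α ux uy = Cm α ux uy * M0 lam α := by
  ext i j
  fin_cases i <;> fin_cases j <;>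
    · norm_num [Mmat, Q, vx, vy, Cm, M0, Matrix.mul_apply, Fin.sum_univ_succ,
        v9_0, v9_1, v9_2, v9_3, v9_4, v9_5, v9_6, v9_7, v9_8]
      try ring

/-- For `λ ≠ 0`, the moment matrix associated with the polynomials
`1, X, Y, X²+Y², X²−Y², XY, XY²+α(X²+Y²), YX²+α(X²+Y²), X²Y²`
shifted by any relative velocity `ũ` is invertible. -/
theorem stmt_5 (lam : ℝ) (hlam : lam ≠ 0) (α : ℝ) (ux uy : ℝ) :
    IsUnit (Mmat lam α ux uy) := by
  rw [Mmat_decomp, M0_decomp]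
  exact (Cm_unit α ux uy).mul ((Rm_unit α).mul (Am_unit lam hlam))
end

section
/- Let λ ∈ ℝ and let v₀,…,v₈ be the D2Q9 velocities. Let ũ = (ũˣ, ũʸ) ∈ ℝ² and let M be any invertible 9×9 real matrix whose row 0 is the constant row (1,…,1), whose row 1 has entries vⱼˣ − ũˣ, and whose row 2 has entries vⱼʸ − ũʸ. Let D = diag(0, 0, 0, s₃, s₄, s₅, s₆, s₇, s₈) for arbitrary s₃,…,s₈ ∈ ℝ. If f, f^eq ∈ ℝ⁹ satisfy Σⱼ f^eq_j = Σⱼ f_j and Σⱼ vⱼ f^eq_j = Σⱼ vⱼ f_j, then the relaxed distribution f* = f + M⁻¹ D M (f^eq − f) satisfies Σⱼ f*_j = Σⱼ f_j and Σⱼ vⱼ f*_j = Σⱼ vⱼ f_j; that is, the relaxation phase of the relative velocity scheme conserves the density and the momentum. -/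
/-- The relaxation phase `f ↦ f + M⁻¹ D M (f^eq − f)` of a relative velocity
scheme, whose moment matrix `M` has rows `1`, `vʲₓ − ũˣ`, `vʲ_y − ũʸ` as its
first three rows and whose relaxation parameters vanish on the first three
moments, conserves the density and the momentum. -/
theorem stmt_6 (lam : ℝ) (ux uy : ℝ) (M : Matrix (Fin 9) (Fin 9) ℝ)
    (hM : IsUnit M)
    (hrow0 : ∀ j, M 0 j = 1)
    (hrow1 : ∀ j, M 1 j = vx lam j - ux)
    (hrow2 : ∀ j, M 2 j = vy lam j - uy)
    (s : Fin 9 → ℝ) (hs0 : s 0 = 0) (hs1 : s 1 = 0) (hs2 : s 2 = 0)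
    (f feq : Fin 9 → ℝ)
    (hρ : ∑ j, feq j = ∑ j, f j)
    (hqx : ∑ j, vx lam j * feq j = ∑ j, vx lam j * f j)
    (hqy : ∑ j, vy lam j * feq j = ∑ j, vy lam j * f j) :
    (∑ j, (f + (M⁻¹ * Matrix.diagonal s * M).mulVec (feq - f)) j = ∑ j, f j) ∧
    (∑ j, vx lam j * (f + (M⁻¹ * Matrix.diagonal s * M).mulVec (feq - f)) j
        = ∑ j, vx lam j * f j) ∧
    (∑ j, vy lam j * (f + (M⁻¹ * Matrix.diagonal s * M).mulVec (feq - f)) j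
        = ∑ j, vy lam j * f j) := by
  set g := (M⁻¹ * Matrix.diagonal s * M).mulVec (feq - f) with hg
  have hdet : IsUnit M.det := (Matrix.isUnit_iff_isUnit_det M).mp hM
  have hMg : M.mulVec g = (Matrix.diagonal s).mulVec (M.mulVec (feq - f)) := by
    rw [hg, Matrix.mulVec_mulVec, ← mul_assoc, ← mul_assoc,
      Matrix.mul_nonsing_inv M hdet, one_mul, ← Matrix.mulVec_mulVec]
  have hrow : ∀ i, s i = 0 → ∑ j, M i j * g j = 0 := by
    intro i hi
    have : M.mulVec g i = 0 := by
      rw [hMg, Matrix.mulVec_diagonal, hi, zero_mul]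
    simpa [Matrix.mulVec, dotProduct] using this
  have h0 : ∑ j, g j = 0 := by
    have := hrow 0 hs0
    simpa [hrow0] using this
  have h1 : ∑ j, vx lam j * g j = 0 := by
    have := hrow 1 hs1
    have h1' : ∑ j, (vx lam j - ux) * g j = 0 := by
      simpa [hrow1] using this
    have : ∑ j, (vx lam j * g j - ux * g j) = 0 := by
      simpa [sub_mul] using h1'
    rw [Finset.sum_sub_distrib, ← Finset.mul_sum, h0, mul_zero, sub_zero] at this
    exact this
  have h2 : ∑ j, vy lam j * g j = 0 := by
    have := hrow 2 hs2
    have h2' : ∑ j, (vy lam j - uy) * g j = 0 := by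
      simpa [hrow2] using this
    have : ∑ j, (vy lam j * g j - uy * g j) = 0 := by
      simpa [sub_mul] using h2'
    rw [Finset.sum_sub_distrib, ← Finset.mul_sum, h0, mul_zero, sub_zero] at this
    exact this
  refine ⟨?_, ?_, ?_⟩
  · simp [Pi.add_apply, Finset.sum_add_distrib, h0]
  · simp [Pi.add_apply, mul_add, Finset.sum_add_distrib, h1]
  · simp [Pi.add_apply, mul_add, Finset.sum_add_distrib, h2]
end

section
/- Let λ ∈ ℝ and let v₀,…,v₈ be the D2Q9 velocities. Let ũ = (ũˣ, ũʸ) ∈ ℝ², let M be any invertible 9×9 real matrix whose row 0 is the constant row (1,…,1), whose row 1 has entries vⱼˣ − ũˣ, and whose row 2 has entries vⱼʸ − ũʸ, and let s ∈ ℝ and D = diag(0, 0, 0, s, s, s, s, s, s). Then for every g ∈ ℝ⁹ with Σⱼ g_j = 0 and Σⱼ vⱼ g_j = 0 one has M⁻¹ D M g = s g. In particular, for the BGK scheme (a single relaxation parameter on all non-conserved moments) the relaxation phase f* = f + M⁻¹ D M (f^eq − f) = f + s(f^eq − f) is independent of the relative velocity ũ and of the choice of moment matrix, whenever f^eq has the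 same density and momentum as f. -/
/-- For the BGK scheme (a single relaxation parameter `s` on all non-conserved
moments, `D = diag(0,0,0,s,…,s)`), the operator `M⁻¹ D M` acts as `s • id` on
every vector with zero density and momentum; consequently the relaxation phase
`f* = f + M⁻¹ D M (f^eq − f) = f + s (f^eq − f)` is independent of the relative
velocity `ũ` and of the choice of moment matrix. -/
theorem stmt_7 (lam : ℝ) (ux uy : ℝ) (M : Matrix (Fin 9) (Fin 9) ℝ)
    (hM : IsUnit M)
    (hrow0 : ∀ j, M 0 j = 1)
    (hrow1 : ∀ j, M 1 j = vx lam j - ux)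
    (hrow2 : ∀ j, M 2 j = vy lam j - uy)
    (s : ℝ) :
    (∀ g : Fin 9 → ℝ, (∑ j, g j = 0) → (∑ j, vx lam j * g j = 0) →
        (∑ j, vy lam j * g j = 0) →
        (M⁻¹ * Matrix.diagonal (![0, 0, 0, s, s, s, s, s, s]) * M).mulVec g = s • g) ∧
    (∀ f feq : Fin 9 → ℝ,
        (∑ j, feq j = ∑ j, f j) →
        (∑ j, vx lam j * feq j = ∑ j, vx lam j * f j) →
        (∑ j, vy lam j * feq j = ∑ j, vy lam j * f j) →
        f + (M⁻¹ * Matrix.diagonal (![0, 0, 0, s, s, s, s, s, s]) * M).mulVec (feq - f)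
          = f + s • (feq - f)) := by
  have key : ∀ g : Fin 9 → ℝ, (∑ j, g j = 0) → (∑ j, vx lam j * g j = 0) →
      (∑ j, vy lam j * g j = 0) →
      (M⁻¹ * Matrix.diagonal (![0, 0, 0, s, s, s, s, s, s]) * M).mulVec g = s • g := by
    intro g h0 h1 h2
    have hw0 : (M.mulVec g) 0 = 0 := by
      simp only [Matrix.mulVec, dotProduct]
      calc ∑ j, M 0 j * g j = ∑ j, g j := by
            apply Finset.sum_congr rfl; intro j _; rw [hrow0 j, one_mul]
        _ = 0 := h0
    have hw1 : (M.mulVec g) 1 = 0 := by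
      simp only [Matrix.mulVec, dotProduct]
      calc ∑ j, M 1 j * g j = ∑ j, (vx lam j * g j - ux * g j) := by
            apply Finset.sum_congr rfl; intro j _; rw [hrow1 j]; ring
        _ = (∑ j, vx lam j * g j) - ux * ∑ j, g j := by
            rw [Finset.sum_sub_distrib, Finset.mul_sum]
        _ = 0 := by rw [h1, h0]; ring
    have hw2 : (M.mulVec g) 2 = 0 := by
      simp only [Matrix.mulVec, dotProduct]
      calc ∑ j, M 2 j * g j = ∑ j, (vy lam j * g j - uy * g j) := by
            apply Finset.sum_congr rfl; intro j _; rw [hrow2 j]; ring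
        _ = (∑ j, vy lam j * g j) - uy * ∑ j, g j := by
            rw [Finset.sum_sub_distrib, Finset.mul_sum]
        _ = 0 := by rw [h2, h0]; ring
    have hD : (Matrix.diagonal (![0, 0, 0, s, s, s, s, s, s])).mulVec (M.mulVec g)
        = s • (M.mulVec g) := by
      funext j
      fin_cases j <;> simp [Matrix.mulVec_diagonal, hw0, hw1, hw2] <;> exact Or.inl rfl
    have hsplit : (M⁻¹ * Matrix.diagonal (![0, 0, 0, s, s, s, s, s, s]) * M).mulVec g
        = M⁻¹.mulVec ((Matrix.diagonal (![0, 0, 0, s, s, s, s, s, s])).mulVec (M.mulVec g)) := by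
      rw [← Matrix.mulVec_mulVec, ← Matrix.mulVec_mulVec]
    rw [hsplit, hD, Matrix.mulVec_smul, Matrix.mulVec_mulVec, Matrix.nonsing_inv_mul M
        (by rwa [Matrix.isUnit_iff_isUnit_det] at hM), Matrix.one_mulVec]
  refine ⟨key, fun f feq hd hx hy => ?_⟩
  have hg : ∑ j, (feq - f) j = 0 := by
    simp only [Pi.sub_apply, Finset.sum_sub_distrib, hd, sub_self]
  have hgx : ∑ j, vx lam j * (feq - f) j = 0 := by
    simp only [Pi.sub_apply, mul_sub, Finset.sum_sub_distrib, hx, sub_self]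
  have hgy : ∑ j, vy lam j * (feq - f) j = 0 := by
    simp only [Pi.sub_apply, mul_sub, Finset.sum_sub_distrib, hy, sub_self]
  rw [key (feq - f) hg hgx hgy]
end

section
/- Let λ ∈ ℝ with λ ≠ 0 and let v₀,…,v₈ be the D2Q9 velocities. For α ∈ ℝ and ũ ∈ ℝ² let M_{ũ,α} be the 9×9 matrix with entries (M_{ũ,α})_{kj} = Q_k(vⱼ − ũ), where (Q₀,…,Q₈) are the polynomials 1, X, Y, X²+Y², X²−Y², XY, XY²+α(X²+Y²), YX²+α(X²+Y²), X²Y². Let D = diag(0, 0, 0, s₃, s₄, s₅, s₆, s₇, s₈) with s₃ = s₆ = s₇. Then for all α, α′ ∈ ℝ and every ũ ∈ ℝ² one has the exact matrix identity M_{ũ,α}⁻¹ D M_{ũ,α} = M_{ũ,α′}⁻¹ D M_{ũ,α′}. In particular, the relaxation phase of the relative velocity scheme with these moments and a TRT₁ choice of relaxation parameters is independent of α, whatever the relative velocity ũ. -/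
/-- The nilpotent matrix adding row 3 to rows 6 and 7. -/
def Nmat : Matrix (Fin 9) (Fin 9) ℝ :=
  Matrix.single 6 3 1 + Matrix.single 7 3 1

/-- The unipotent shear matrix relating `M_α` to `M_0`. -/
def Emat (α : ℝ) : Matrix (Fin 9) (Fin 9) ℝ := 1 + α • Nmat

lemma Nmat_sq : Nmat * Nmat = 0 := by
  simp only [Nmat, Matrix.add_mul, Matrix.mul_add,
    Matrix.single_mul_single_of_ne (h := (by decide : (3 : Fin 9) ≠ 6)),
    Matrix.single_mul_single_of_ne (h := (by decide : (3 : Fin 9) ≠ 7))]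
  simp

lemma Emat_mul (α β : ℝ) : Emat α * Emat β = Emat (α + β) := by
  simp only [Emat, Matrix.add_mul, Matrix.mul_add, Matrix.one_mul, Matrix.mul_one,
    Matrix.smul_mul, Matrix.mul_smul, smul_smul, Nmat_sq, smul_zero, add_zero, add_smul]
  abel

lemma Emat_zero : Emat 0 = 1 := by simp [Emat]

lemma Emat_inv (α : ℝ) : (Emat α)⁻¹ = Emat (-α) := by
  apply Matrix.inv_eq_left_inv
  rw [Emat_mul, neg_add_cancel, Emat_zero]

lemma diagonal_mul_stdBasis (s : Fin 9 → ℝ) (i j : Fin 9) (c : ℝ) :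
    Matrix.diagonal s * Matrix.single i j c
      = Matrix.single i j (s i * c) := by
  ext a b
  by_cases h : i = a ∧ j = b
  · obtain ⟨rfl, rfl⟩ := h
    simp [Matrix.diagonal_mul]
  · simp [Matrix.diagonal_mul, Matrix.single_apply_of_ne _ _ _ _ _ h]

lemma stdBasis_mul_diagonal (s : Fin 9 → ℝ) (i j : Fin 9) (c : ℝ) :
    Matrix.single i j c * Matrix.diagonal s
      = Matrix.single i j (c * s j) := by
  ext a b
  by_cases h : i = a ∧ j = b
  · obtain ⟨rfl, rfl⟩ := h
    simp [Matrix.mul_diagonal]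
  · simp [Matrix.mul_diagonal, Matrix.single_apply_of_ne _ _ _ _ _ h]

lemma Emat_comm (α : ℝ) (s : Fin 9 → ℝ) (hs36 : s 3 = s 6) (hs37 : s 3 = s 7) :
    Emat α * Matrix.diagonal s = Matrix.diagonal s * Emat α := by
  simp only [Emat, Matrix.add_mul, Matrix.mul_add, Matrix.one_mul, Matrix.mul_one,
    Matrix.smul_mul, Matrix.mul_smul, Nmat]
  rw [stdBasis_mul_diagonal, stdBasis_mul_diagonal, diagonal_mul_stdBasis,
    diagonal_mul_stdBasis]
  simp only [one_mul, mul_one]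
  rw [← hs36, ← hs37]

lemma stdB_mul_apply (i : Fin 9) (M : Matrix (Fin 9) (Fin 9) ℝ) (k j : Fin 9) :
    (Matrix.single i (3 : Fin 9) (1 : ℝ) * M) k j = if k = i then M 3 j else 0 := by
  by_cases h : k = i
  · subst h; simp
  · simp [h]

lemma Mmat_factor (lam α ux uy : ℝ) :
    Mmat lam α ux uy = Emat α * Mmat lam 0 ux uy := by
  rw [Emat, Matrix.add_mul, Matrix.one_mul, Matrix.smul_mul, Nmat, Matrix.add_mul]
  ext k j
  fin_cases k <;>
    norm_num [Mmat, Q, Matrix.add_apply, Matrix.smul_apply, stdB_mul_apply, Fin.ext_iff, Matrix.cons_val_three,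
      show ((6 : Fin 9) : ℕ) = 6 from rfl, show ((7 : Fin 9) : ℕ) = 7 from rfl] <;> ring

lemma key (lam α ux uy : ℝ) (s : Fin 9 → ℝ) (hs36 : s 3 = s 6) (hs37 : s 3 = s 7) :
    (Mmat lam α ux uy)⁻¹ * Matrix.diagonal s * Mmat lam α ux uy
      = (Mmat lam 0 ux uy)⁻¹ * Matrix.diagonal s * Mmat lam 0 ux uy := by
  rw [Mmat_factor lam α ux uy, Matrix.mul_inv_rev, Emat_inv]
  have h1 : Emat (-α) * (Matrix.diagonal s * (Emat α * Mmat lam 0 ux uy))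
      = Matrix.diagonal s * Mmat lam 0 ux uy := by
    rw [← Matrix.mul_assoc (Emat (-α)), Emat_comm (-α) s hs36 hs37,
      Matrix.mul_assoc, ← Matrix.mul_assoc (Emat (-α)), Emat_mul,
      neg_add_cancel, Emat_zero, Matrix.one_mul]
  simp only [Matrix.mul_assoc]
  rw [h1]

/-- Provided the moment of `X²+Y²` and the two third-order moments share the
same relaxation parameter (`s 3 = s 6 = s 7`, as for the TRT₁ choice), the
relaxation operator `M⁻¹ D M` of the relative velocity scheme with moments
`1, X, Y, X²+Y², X²−Y², XY, XY²+α(X²+Y²), YX²+α(X²+Y²), X²Y²` is independent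
of `α`, whatever the relative velocity `ũ`. -/
theorem stmt_9 (lam : ℝ) (hlam : lam ≠ 0)
    (s : Fin 9 → ℝ) (hs0 : s 0 = 0) (hs1 : s 1 = 0) (hs2 : s 2 = 0)
    (hs36 : s 3 = s 6) (hs37 : s 3 = s 7)
    (α α' : ℝ) (ux uy : ℝ) :
    (Mmat lam α ux uy)⁻¹ * Matrix.diagonal s * Mmat lam α ux uy
      = (Mmat lam α' ux uy)⁻¹ * Matrix.diagonal s * Mmat lam α' ux uy := by
  rw [key lam α ux uy s hs36 hs37, key lam α' ux uy s hs36 hs37]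
end

section
/- Let λ ∈ ℝ with λ ≠ 0 and let v₀,…,v₈ be the D2Q9 velocities. Let M₁ be the 9×9 matrix whose rows are the polynomials 1, X, Y, X²+Y², X²−Y², XY, X(X²+Y²), Y(X²+Y²), (X²+Y²)² evaluated at the vⱼ, and let M₂ be the 9×9 matrix whose rows are the polynomials 1, X, Y, X²+Y², X²−Y², XY, XY², YX², X²Y² evaluated at the vⱼ. Let D = diag(0, 0, 0, s₃, s₄, s₅, s₆, s₇, s₈) with s₃ = s₈. Then for every g ∈ ℝ⁹ with Σⱼ g_j = 0 and Σⱼ vⱼ g_j = 0, one has M₁⁻¹ D M₁ g = M₂⁻¹ D M₂ g. In particular, the relaxation phases of the d'Humičres scheme (relative velocity ũ = 0) based on the usual D2Q9 moments and on the cascaded-scheme moments are equivalent. -/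
/-- The usual D2Q9 moment polynomials `1, X, Y, X²+Y², X²−Y², XY, X(X²+Y²),
Y(X²+Y²), (X²+Y²)²` evaluated at `(x, y)`. -/
def P1 (x y : ℝ) : Fin 9 → ℝ :=
  ![1, x, y, x ^ 2 + y ^ 2, x ^ 2 - y ^ 2, x * y,
    x * (x ^ 2 + y ^ 2), y * (x ^ 2 + y ^ 2), (x ^ 2 + y ^ 2) ^ 2]

/-- The cascaded-scheme moment polynomials `1, X, Y, X²+Y², X²−Y², XY, XY²,
YX², X²Y²` evaluated at `(x, y)`. -/
def P2 (x y : ℝ) : Fin 9 → ℝ :=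
  ![1, x, y, x ^ 2 + y ^ 2, x ^ 2 - y ^ 2, x * y,
    x * y ^ 2, y * x ^ 2, x ^ 2 * y ^ 2]

/-- Moment matrix of the usual D2Q9 moments (ũ = 0). -/
def M1 (lam : ℝ) : Matrix (Fin 9) (Fin 9) ℝ :=
  fun k j => P1 (vx lam j) (vy lam j) k

/-- Moment matrix of the cascaded-scheme moments (ũ = 0). -/
def M2 (lam : ℝ) : Matrix (Fin 9) (Fin 9) ℝ :=
  fun k j => P2 (vx lam j) (vy lam j) k

/-- Change-of-moment-basis matrix: `M2 = Amat * M1` (it encodes the lattice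
identities `x³ = λ²x`, `y³ = λ²y`, `x⁴ + y⁴ = λ²(x² + y²)`). -/
noncomputable def Amat (lam : ℝ) : Matrix (Fin 9) (Fin 9) ℝ :=
  !![1,0,0,0,0,0,0,0,0;
     0,1,0,0,0,0,0,0,0;
     0,0,1,0,0,0,0,0,0;
     0,0,0,1,0,0,0,0,0;
     0,0,0,0,1,0,0,0,0;
     0,0,0,0,0,1,0,0,0;
     0,-lam^2,0,0,0,0,1,0,0;
     0,0,-lam^2,0,0,0,0,1,0;
     0,0,0,-lam^2/2,0,0,0,0,(1:ℝ)/2]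

/-- The inverse of `Amat`. -/
noncomputable def Bmat (lam : ℝ) : Matrix (Fin 9) (Fin 9) ℝ :=
  !![1,0,0,0,0,0,0,0,0;
     0,1,0,0,0,0,0,0,0;
     0,0,1,0,0,0,0,0,0;
     0,0,0,1,0,0,0,0,0;
     0,0,0,0,1,0,0,0,0;
     0,0,0,0,0,1,0,0,0;
     0,lam^2,0,0,0,0,1,0,0;
     0,0,lam^2,0,0,0,0,1,0;
     0,0,0,lam^2,0,0,0,0,2]

set_option maxHeartbeats 2000000 in
/-- The cascaded moment matrix is `Amat` times the usual moment matrix. -/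
lemma M2_eq_A_mul_M1 (lam : ℝ) : M2 lam = Amat lam * M1 lam := by
  rw [← Matrix.ext_iff]
  simp only [Fin.forall_fin_succ]
  repeat' apply And.intro
  all_goals first
    | exact fun i => i.elim0
    | (simp only [M1, M2, P1, P2, vx, vy, Amat,
        Matrix.mul_apply, Fin.sum_univ_succ, Fin.sum_univ_zero, Matrix.of_apply,
        Matrix.cons_val_zero, Matrix.cons_val_succ]
       try ring)

set_option maxHeartbeats 2000000 in
/-- `Bmat` is a left inverse of `Amat`. -/
lemma B_mul_A (lam : ℝ) : Bmat lam * Amat lam = 1 := by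
  rw [← Matrix.ext_iff]
  simp only [Fin.forall_fin_succ]
  repeat' apply And.intro
  all_goals first
    | exact fun i => i.elim0
    | (simp only [Amat, Bmat,
        Matrix.mul_apply, Fin.sum_univ_succ, Fin.sum_univ_zero, Matrix.of_apply,
        Matrix.cons_val_zero, Matrix.cons_val_succ]
       simp [Matrix.one_apply, Fin.ext_iff]
       try ring)

set_option maxHeartbeats 2000000 in
/-- For the d'Humières scheme (ũ = 0), the relaxation operators based on the
usual D2Q9 moments and on the cascaded-scheme moments agree on every vector
with zero density and momentum, provided `s 3 = s 8`. -/
theorem stmt_10 (lam : ℝ) (hlam : lam ≠ 0)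
    (s : Fin 9 → ℝ) (hs0 : s 0 = 0) (hs1 : s 1 = 0) (hs2 : s 2 = 0)
    (hs38 : s 3 = s 8)
    (g : Fin 9 → ℝ) (hg : ∑ j, g j = 0)
    (hgx : ∑ j, vx lam j * g j = 0) (hgy : ∑ j, vy lam j * g j = 0) :
    ((M1 lam)⁻¹ * Matrix.diagonal s * M1 lam).mulVec g
      = ((M2 lam)⁻¹ * Matrix.diagonal s * M2 lam).mulVec g := by
  have hM2 := M2_eq_A_mul_M1 lam
  have hBA := B_mul_A lam
  have hAinv : (Amat lam)⁻¹ = Bmat lam := Matrix.inv_eq_left_inv hBA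
  set m : Fin 9 → ℝ := (M1 lam).mulVec g with hm
  have hm1 : m (Fin.succ 0) = 0 := by
    rw [← hgx, hm]
    simp only [Matrix.mulVec, dotProduct, M1, P1,
      Matrix.cons_val_succ, Matrix.cons_val_zero]
  have hm2 : m ((Fin.succ 0).succ) = 0 := by
    rw [← hgy, hm]
    simp only [Matrix.mulVec, dotProduct, M1, P1,
      Matrix.cons_val_succ, Matrix.cons_val_zero]
  have hs1' : s (Fin.succ 0) = 0 := hs1
  have hs2' : s ((Fin.succ 0).succ) = 0 := hs2
  have hs38' : s ((Fin.succ 0).succ.succ)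
      = s ((Fin.succ 0).succ.succ.succ.succ.succ.succ.succ) := hs38
  have hDm : (Matrix.diagonal s).mulVec m = fun i => s i * m i :=
    funext fun i => Matrix.mulVec_diagonal s m i
  have hDa : (Matrix.diagonal s).mulVec ((Amat lam).mulVec m)
      = fun i => s i * (Amat lam).mulVec m i :=
    funext fun i => Matrix.mulVec_diagonal s _ i
  have key : (Bmat lam).mulVec ((Matrix.diagonal s).mulVec ((Amat lam).mulVec m))
      = (Matrix.diagonal s).mulVec m := by
    rw [hDm, hDa]
    funext i
    revert i
    simp only [Fin.forall_fin_succ]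
    repeat' apply And.intro
    all_goals first
      | exact fun i => i.elim0
      | (simp only [Amat, Bmat, Matrix.mulVec, dotProduct,
          Fin.sum_univ_succ, Fin.sum_univ_zero,
          Matrix.of_apply, Matrix.cons_val_zero, Matrix.cons_val_succ]
         simp only [hs1', hs2', hs38', hm1, hm2]
         try ring)
  rw [hM2, Matrix.mul_inv_rev, hAinv]
  simp only [Matrix.mul_assoc, ← Matrix.mulVec_mulVec]
  rw [← hm, key]
end
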